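/- Let (B_t)_{t≥1} and B be p×p real matrices satisfying: (i) there exist M₁ > 0 and r₁ ∈ (0,1) with ‖B_t − B‖_F ≤ M₁ r₁ᵗ for all t ≥ 1 and ‖Bᵏ‖_F ≤ M₁ r₁ᵏ for all k ≥ 0; (ii) there exists M₃ > 0 such that ‖∏_{i=k}^{l} B_{t−i}‖_F ≤ M₃ for all integers 0 ≤ k ≤ l < t. Then the ordered product B_t B_{t−1} ⋯ B_1 converges to the zero matrix as t → ∞ (i.e., ‖B_t B_{t−1} ⋯ B_1‖_F → 0). -/
import Mathlib


open Matrix Set Filter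

attribute [local instance] Matrix.frobeniusSeminormedAddCommGroup Matrix.frobeniusNormedRing

/-- The Frobenius norm of a real matrix: `‖A‖_F = √(tr (A * Aᵀ))`. -/
noncomputable def frobNorm {m n : Type*} [Fintype m] [Fintype n] (A : Matrix m n ℝ) : ℝ :=
  Real.sqrt (Matrix.trace (A * Aᵀ))


lemma frob_eq {p : ℕ} (A : Matrix (Fin p) (Fin p) ℝ) : frobNorm A = ‖A‖ := by
  rw [frobNorm, Matrix.frobenius_norm_def, Real.sqrt_eq_rpow]
  congr 1
  simp [Matrix.trace, Matrix.diag, Matrix.mul_apply, Real.norm_eq_abs, Real.rpow_two, sq_abs, sq]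

/-- The ordered product `∏_{i=k}^{l} B_{t−i} = B_{t−k} B_{t−k−1} ⋯ B_{t−l}`. -/
noncomputable def ordProd {p : ℕ} (B : ℕ → Matrix (Fin p) (Fin p) ℝ) (t k l : ℕ) :
    Matrix (Fin p) (Fin p) ℝ :=
  ((List.range (l - k + 1)).map fun i => B (t - (k + i))).prod


noncomputable def Pprod {p : ℕ} (B : ℕ → Matrix (Fin p) (Fin p) ℝ) (t m : ℕ) :
    Matrix (Fin p) (Fin p) ℝ :=
  ((List.range m).map fun i => B (t - i)).prod

lemma Pprod_succ {p : ℕ} (B : ℕ → Matrix (Fin p) (Fin p) ℝ) {t : ℕ} (m : ℕ) (h : 1 ≤ t) :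
    Pprod B t (m + 1) = B t * Pprod B (t - 1) m := by
  rw [Pprod, show m + 1 = 1 + m from by omega, List.range_add, List.map_append,
    List.prod_append, List.map_map]
  have h1 : (List.map (fun i => B (t - i)) (List.range 1)).prod = B t := by
    rw [show List.range 1 = [0] from rfl, List.map_singleton, List.prod_singleton, Nat.sub_zero]
  rw [h1, Pprod]
  congr 1
  exact congrArg List.prod
    (List.map_congr_left fun i _ => by
      show B (t - (1 + i)) = B (t - 1 - i)
      rw [show t - (1 + i) = t - 1 - i from by omega])

lemma Pprod_split {p : ℕ} (B : ℕ → Matrix (Fin p) (Fin p) ℝ) {t m n : ℕ} (h : m ≤ n) :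
    Pprod B t n = Pprod B t m * ((List.range (n - m)).map fun i => B (t - (m + i))).prod := by
  conv_lhs => rw [Pprod, show n = m + (n - m) from by omega, List.range_add, List.map_append,
    List.prod_append, List.map_map]
  rw [Pprod]
  congr 2

lemma ordProd_eq_P {p : ℕ} (B : ℕ → Matrix (Fin p) (Fin p) ℝ) (t l : ℕ) :
    ordProd B t 0 l = Pprod B t (l + 1) := by
  simp [ordProd, Pprod]

/-- Under the same hypotheses as Statement 5, the ordered product
`B_t B_{t−1} ⋯ B_1` converges to the zero matrix as `t → ∞`, i.e.
`‖B_t B_{t−1} ⋯ B_1‖_F → 0`. -/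
theorem ordProd_tendsto_zero
    {p : ℕ} (B : ℕ → Matrix (Fin p) (Fin p) ℝ) (Blim : Matrix (Fin p) (Fin p) ℝ)
    (M₁ r₁ : ℝ) (hM₁ : 0 < M₁) (hr₁ : r₁ ∈ Ioo (0 : ℝ) 1)
    (hB : ∀ t : ℕ, 1 ≤ t → frobNorm (B t - Blim) ≤ M₁ * r₁ ^ t)
    (hBpow : ∀ k : ℕ, frobNorm (Blim ^ k) ≤ M₁ * r₁ ^ k)
    (M₃ : ℝ) (hM₃ : 0 < M₃)
    (hbdd : ∀ t k l : ℕ, k ≤ l → l < t → frobNorm (ordProd B t k l) ≤ M₃) :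
    Tendsto (fun t : ℕ => frobNorm (ordProd B t 0 (t - 1))) atTop (nhds 0) := by
  obtain ⟨hr0, hr1⟩ := hr₁
  simp only [frob_eq] at hB hBpow hbdd ⊢
  set C : ℝ := M₃ + Real.sqrt p with hCdef
  have hsqrtp : (0:ℝ) ≤ Real.sqrt p := Real.sqrt_nonneg _
  have hC : 0 < C := by positivity
  set K : ℝ := M₁ * M₁ * C with hKdef
  have hK : 0 < K := by positivity
  -- norm of identity
  have hone : ‖(1 : Matrix (Fin p) (Fin p) ℝ)‖ = Real.sqrt p := by
    rw [← frob_eq, frobNorm, Matrix.transpose_one, mul_one, Matrix.trace_one]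
    simp
  -- bound on partial products
  have hPle : ∀ s m : ℕ, m < s → ‖Pprod B s m‖ ≤ C := by
    intro s m hms
    match m with
    | 0 =>
      have : Pprod B s 0 = 1 := by simp [Pprod]
      rw [this, hone, hCdef]; linarith
    | Nat.succ m' =>
      have : Pprod B s (m' + 1) = ordProd B s 0 m' := (ordProd_eq_P B s m').symm
      rw [this, hCdef]
      have := hbdd s 0 m' (Nat.zero_le _) (by omega)
      linarith
  -- key telescoping bound
  have key : ∀ m : ℕ, ∀ a t : ℕ, m < t →
      ‖Blim ^ a * (Pprod B t m - Blim ^ m)‖ ≤ m * K * (r₁ ^ a * r₁ ^ t) := by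
    intro m
    induction m with
    | zero =>
      intro a t _
      simp [Pprod]
    | succ m ih =>
      intro a t ht
      have h1t : 1 ≤ t := by omega
      have hsplit : Blim ^ a * (Pprod B t (m + 1) - Blim ^ (m + 1)) =
          Blim ^ a * (B t - Blim) * Pprod B (t - 1) m
            + Blim ^ (a + 1) * (Pprod B (t - 1) m - Blim ^ m) := by
        rw [Pprod_succ B m h1t, pow_succ' Blim m, pow_succ Blim a]
        noncomm_ring
      rw [hsplit]
      have hP : ‖Pprod B (t - 1) m‖ ≤ C := hPle (t - 1) m (by omega)
      have h1 : ‖Blim ^ a * (B t - Blim) * Pprod B (t - 1) m‖ ≤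
          (M₁ * r₁ ^ a) * (M₁ * r₁ ^ t) * C := by
        calc ‖Blim ^ a * (B t - Blim) * Pprod B (t - 1) m‖
            ≤ ‖Blim ^ a * (B t - Blim)‖ * ‖Pprod B (t - 1) m‖ := norm_mul_le _ _
          _ ≤ (‖Blim ^ a‖ * ‖B t - Blim‖) * ‖Pprod B (t - 1) m‖ :=
              mul_le_mul_of_nonneg_right (norm_mul_le _ _) (norm_nonneg _)
          _ ≤ (M₁ * r₁ ^ a) * (M₁ * r₁ ^ t) * C :=
              mul_le_mul
                (mul_le_mul (hBpow a) (hB t h1t) (norm_nonneg _) (by positivity))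
                hP (norm_nonneg _) (by positivity)
      have h2 : ‖Blim ^ (a + 1) * (Pprod B (t - 1) m - Blim ^ m)‖ ≤
          m * K * (r₁ ^ (a + 1) * r₁ ^ (t - 1)) := ih (a + 1) (t - 1) (by omega)
      have hpow : r₁ ^ (a + 1) * r₁ ^ (t - 1) = r₁ ^ a * r₁ ^ t := by
        rw [← pow_add, ← pow_add]
        congr 1
        omega
      rw [hpow] at h2
      calc ‖Blim ^ a * (B t - Blim) * Pprod B (t - 1) m
            + Blim ^ (a + 1) * (Pprod B (t - 1) m - Blim ^ m)‖
          ≤ ‖Blim ^ a * (B t - Blim) * Pprod B (t - 1) m‖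
            + ‖Blim ^ (a + 1) * (Pprod B (t - 1) m - Blim ^ m)‖ := norm_add_le _ _
        _ ≤ (M₁ * r₁ ^ a) * (M₁ * r₁ ^ t) * C + m * K * (r₁ ^ a * r₁ ^ t) := by linarith
        _ = (m + 1 : ℕ) * K * (r₁ ^ a * r₁ ^ t) := by push_cast [hKdef]; ring
  -- main bound
  have main : ∀ m t : ℕ, m < t →
      ‖ordProd B t 0 (t - 1)‖ ≤ (m * K * r₁ ^ t + M₁ * r₁ ^ m) * M₃ := by
    intro m t h
    have h1t : 1 ≤ t := by omega
    have hsplit : ordProd B t 0 (t - 1) = Pprod B t m * ordProd B t m (t - 1) := by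
      rw [ordProd_eq_P, show t - 1 + 1 = t from by omega, Pprod_split B (le_of_lt h)]
      congr 1
      rw [ordProd, show t - 1 - m + 1 = t - m from by omega]
    rw [hsplit]
    have htail : ‖ordProd B t m (t - 1)‖ ≤ M₃ := hbdd t m (t - 1) (by omega) (by omega)
    have hhead : ‖Pprod B t m‖ ≤ m * K * r₁ ^ t + M₁ * r₁ ^ m := by
      have hk := key m 0 t h
      rw [pow_zero, one_mul, pow_zero, one_mul] at hk
      have tri : ‖Pprod B t m‖ ≤ ‖Pprod B t m - Blim ^ m‖ + ‖Blim ^ m‖ := by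
        have := norm_add_le (Pprod B t m - Blim ^ m) (Blim ^ m)
        simpa using this
      have := hBpow m
      linarith
    calc ‖Pprod B t m * ordProd B t m (t - 1)‖
        ≤ ‖Pprod B t m‖ * ‖ordProd B t m (t - 1)‖ := norm_mul_le _ _
      _ ≤ (m * K * r₁ ^ t + M₁ * r₁ ^ m) * M₃ := by
          apply mul_le_mul hhead htail (norm_nonneg _)
          positivity
  -- conclude
  rw [Metric.tendsto_atTop]
  intro ε hε
  have hpow0 : Tendsto (fun n : ℕ => r₁ ^ n) atTop (nhds 0) :=
    tendsto_pow_atTop_nhds_zero_of_lt_one hr0.le hr1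
  have hm0 : Tendsto (fun n : ℕ => M₁ * r₁ ^ n * M₃) atTop (nhds 0) := by
    have := (hpow0.const_mul M₁).mul_const M₃
    simpa using this
  obtain ⟨m, hm⟩ := (hm0.eventually_lt_const (by linarith : (0:ℝ) < ε / 2)).exists
  have hN0 : Tendsto (fun n : ℕ => (m : ℝ) * K * r₁ ^ n * M₃) atTop (nhds 0) := by
    have := ((hpow0.const_mul ((m : ℝ) * K)).mul_const M₃)
    simpa [mul_assoc] using this
  obtain ⟨N₁, hN₁⟩ := (hN0.eventually_lt_const (by linarith : (0:ℝ) < ε / 2)).exists_forall_of_atTop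
  refine ⟨max N₁ (m + 1), fun t ht => ?_⟩
  have htm : m < t := lt_of_lt_of_le (Nat.lt_succ_self m) (le_trans (le_max_right _ _) ht)
  have hb := main m t htm
  have hN := hN₁ t (le_trans (le_max_left _ _) ht)
  rw [Real.dist_eq, sub_zero, abs_of_nonneg (norm_nonneg _)]
  calc ‖ordProd B t 0 (t - 1)‖ ≤ (m * K * r₁ ^ t + M₁ * r₁ ^ m) * M₃ := hb
    _ = (m : ℝ) * K * r₁ ^ t * M₃ + M₁ * r₁ ^ m * M₃ := by ring
    _ < ε / 2 + ε / 2 := by linarith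
    _ = ε := by ring
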